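/- Let (Ω, 𝓕, P) be a probability space, C ⊆ L^∞ a convex cone with −L^∞₊ ⊆ C, and Φ : (0,∞) → ℝ convex satisfying the growth condition G(Φ) with Φ(0) < +∞. Assume M_Φ ∩ ℙ ≠ ∅ and let f be a random variable with f ∈ L¹(Q) for every Q ∈ M_Φ. Then the weak super replication price of f satisfies inf{x ∈ ℝ : f − x ∈ C_Φ} = sup{E_Q[f] : Q ∈ M_Φ} (equality in ℝ ∪ {+∞}). -/

import Mathlib

open MeasureTheory Filter
open scoped RealInnerProductSpace NNReal ENNReal

variable {Ω : Type*} [MeasurableSpace Ω]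

section AuxLemmas

/-- Linear lower bound for a convex function on `(0,∞)` with value at 0. -/
lemma convex_lower_bound {Φ : ℝ → ℝ} (hΦconv : ConvexOn ℝ (Set.Ioi 0) Φ) :
    ∃ K : ℝ, 0 ≤ K ∧ ∀ t : ℝ, 0 ≤ t → -(K * (1 + t)) ≤ Φ t := by
  refine ⟨|Φ 0| + 3 * |Φ 1| + 3 * |Φ 2| + 3 * |Φ 3|, by positivity, ?_⟩
  have n0 := abs_nonneg (Φ 0); have n1 := abs_nonneg (Φ 1)
  have n2 := abs_nonneg (Φ 2); have n3 := abs_nonneg (Φ 3)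
  intro t ht
  rcases eq_or_lt_of_le ht with h0 | h0
  · rw [← h0]; have := neg_abs_le (Φ 0); nlinarith
  rcases le_or_gt t 2 with h2 | h2
  · rcases eq_or_lt_of_le h2 with rfl | h2
    · have := neg_abs_le (Φ 2); nlinarith
    · have h3t : (0:ℝ) < 3 - t := by linarith
      have key := hΦconv.2 (show t ∈ Set.Ioi (0:ℝ) from h0)
        (show (3:ℝ) ∈ Set.Ioi (0:ℝ) by norm_num)
        (show (0:ℝ) ≤ 1 / (3 - t) by positivity)
        (show (0:ℝ) ≤ (2 - t) / (3 - t) by apply div_nonneg <;> linarith)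
        (by field_simp; ring)
      have heq : (1 / (3 - t)) • t + ((2 - t) / (3 - t)) • (3:ℝ) = 2 := by
        rw [smul_eq_mul, smul_eq_mul, div_mul_eq_mul_div, div_mul_eq_mul_div, ← add_div, div_eq_iff h3t.ne']; ring
      rw [heq] at key
      simp only [smul_eq_mul] at key
      have hmul := mul_le_mul_of_nonneg_left key h3t.le
      have hr : (3 - t) * (1 / (3 - t) * Φ t + (2 - t) / (3 - t) * Φ 3)
          = Φ t + (2 - t) * Φ 3 := by field_simp
      rw [hr] at hmul
      have ha := neg_abs_le (Φ 2); have hb := le_abs_self (Φ 3)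
      nlinarith
  · have h1t : (0:ℝ) < t - 1 := by linarith
    have key := hΦconv.2 (show (1:ℝ) ∈ Set.Ioi (0:ℝ) by norm_num)
      (Set.mem_Ioi.mpr (by linarith : (0:ℝ) < t))
      (show (0:ℝ) ≤ (t - 2) / (t - 1) by apply div_nonneg <;> linarith)
      (show (0:ℝ) ≤ 1 / (t - 1) by positivity)
      (by field_simp; ring)
    have heq : ((t - 2) / (t - 1)) • (1:ℝ) + (1 / (t - 1)) • t = 2 := by
      rw [smul_eq_mul, smul_eq_mul, div_mul_eq_mul_div, div_mul_eq_mul_div, ← add_div, div_eq_iff h1t.ne']; ring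
    rw [heq] at key
    simp only [smul_eq_mul] at key
    have hmul := mul_le_mul_of_nonneg_left key h1t.le
    have hr : (t - 1) * ((t - 2) / (t - 1) * Φ 1 + 1 / (t - 1) * Φ t)
        = (t - 2) * Φ 1 + Φ t := by field_simp
    rw [hr] at hmul
    have ha := neg_abs_le (Φ 2); have hb := le_abs_self (Φ 1)
    nlinarith

lemma convex_small_bound {Φ : ℝ → ℝ} (hΦconv : ConvexOn ℝ (Set.Ioi 0) Φ)
    (hΦ0 : Tendsto Φ (nhdsWithin 0 (Set.Ioi 0)) (nhds (Φ 0))) :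
    ∀ y z : ℝ, 0 < z → z ≤ y → Φ z ≤ max (Φ 0) (Φ y) := by
  intro y z hz hzy
  rcases eq_or_lt_of_le hzy with rfl | hzy
  · exact le_max_right _ _
  refine le_of_forall_pos_le_add (fun ε hε => ?_)
  have h1 : {s : ℝ | Φ s < Φ 0 + ε} ∈ nhdsWithin 0 (Set.Ioi 0) :=
    hΦ0 (Iio_mem_nhds (by linarith))
  have h2 : Set.Ioo (0:ℝ) z ∈ nhdsWithin 0 (Set.Ioi 0) :=
    Ioo_mem_nhdsGT_of_mem ⟨le_refl 0, hz⟩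
  obtain ⟨t, htΦ, ht0, htz⟩ := Filter.nonempty_of_mem (Filter.inter_mem h1 h2)
  have hty : t < y := lt_trans htz hzy
  have hyt : (0:ℝ) < y - t := by linarith
  have ha : (0:ℝ) ≤ (y - z) / (y - t) := by apply div_nonneg <;> linarith
  have hb : (0:ℝ) ≤ (z - t) / (y - t) := by apply div_nonneg <;> linarith
  have hab : (y - z) / (y - t) + (z - t) / (y - t) = 1 := by field_simp; ring
  have key := hΦconv.2 (Set.mem_Ioi.mpr ht0)
    (Set.mem_Ioi.mpr (lt_trans hz hzy)) ha hb hab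
  have heq : ((y - z) / (y - t)) • t + ((z - t) / (y - t)) • y = z := by
    rw [smul_eq_mul, smul_eq_mul, div_mul_eq_mul_div, div_mul_eq_mul_div, ← add_div, div_eq_iff hyt.ne']; ring
  rw [heq] at key
  simp only [smul_eq_mul] at key
  have hΦt : Φ t ≤ Φ 0 + ε := le_of_lt htΦ
  calc Φ z ≤ (y - z) / (y - t) * Φ t + (z - t) / (y - t) * Φ y := key
    _ ≤ (y - z) / (y - t) * (Φ 0 + ε) + (z - t) / (y - t) * Φ y :=
        by gcongr
    _ ≤ (y - z) / (y - t) * (max (Φ 0) (Φ y) + ε)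
        + (z - t) / (y - t) * (max (Φ 0) (Φ y) + ε) := by
        have e1 : Φ 0 + ε ≤ max (Φ 0) (Φ y) + ε := by
          have := le_max_left (Φ 0) (Φ y); linarith
        have e2 : Φ y ≤ max (Φ 0) (Φ y) + ε := by
          have := le_max_right (Φ 0) (Φ y); linarith
        have := mul_le_mul_of_nonneg_left e1 ha
        have := mul_le_mul_of_nonneg_left e2 hb
        linarith
    _ = max (Φ 0) (Φ y) + ε := by rw [← add_mul, hab, one_mul]

/-- The extension of `Φ` by `Φ 0` on `(-∞,0]` is continuous. -/
lemma convex_ext_continuous {Φ : ℝ → ℝ} (hΦconv : ConvexOn ℝ (Set.Ioi 0) Φ)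
    (hΦ0 : Tendsto Φ (nhdsWithin 0 (Set.Ioi 0)) (nhds (Φ 0))) :
    Continuous (fun t : ℝ => if t ≤ 0 then Φ 0 else Φ t) := by
  set Ψ : ℝ → ℝ := fun t => if t ≤ 0 then Φ 0 else Φ t with hΨ
  have hcont : ContinuousOn Φ (Set.Ioi (0:ℝ)) := hΦconv.continuousOn isOpen_Ioi
  rw [continuous_iff_continuousAt]
  intro x
  rcases lt_trichotomy x 0 with hx | rfl | hx
  · have : ∀ᶠ t in nhds x, Ψ t = Φ 0 :=
      Filter.eventually_of_mem (Iio_mem_nhds hx) (fun t ht => if_pos (le_of_lt ht))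
    exact ContinuousAt.congr continuousAt_const (Filter.EventuallyEq.symm this)
  · -- at 0
    rw [ContinuousAt]
    have hval : Ψ 0 = Φ 0 := if_pos le_rfl
    rw [hval]
    rw [← nhdsWithin_univ (0:ℝ), ← Set.Iic_union_Ioi (a := (0:ℝ)), nhdsWithin_union]
    rw [Filter.tendsto_sup]
    constructor
    · apply Filter.Tendsto.congr' (f₁ := fun _ => Φ 0)
      · filter_upwards [self_mem_nhdsWithin] with t ht
        exact (if_pos ht).symm
      · exact tendsto_const_nhds
    · apply Filter.Tendsto.congr' (f₁ := Φ)
      · filter_upwards [self_mem_nhdsWithin] with t ht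
        exact (if_neg (not_le.mpr ht)).symm
      · exact hΦ0
  · have hev : ∀ᶠ t in nhds x, Ψ t = Φ t :=
      Filter.eventually_of_mem (Ioi_mem_nhds hx) (fun t ht => if_neg (not_le.mpr ht))
    exact ContinuousAt.congr (hcont.continuousAt (Ioi_mem_nhds hx)) (Filter.EventuallyEq.symm hev)

lemma norm_toLp_one (Q : Measure Ω) (u : Ω → ℝ) (hu : MemLp u 1 Q) :
    ‖hu.toLp u‖ = ∫ ω, |u ω| ∂Q := by
  have hui : Integrable u Q := memLp_one_iff_integrable.mp hu
  rw [Lp.norm_toLp, eLpNorm_one_eq_lintegral_enorm,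
    ← ofReal_integral_norm_eq_lintegral_enorm hui, ENNReal.toReal_ofReal
      (integral_nonneg (fun ω => norm_nonneg _))]
  simp [Real.norm_eq_abs]

lemma rep_L1_functional (Q : Measure Ω) [IsProbabilityMeasure Q]
    (φ : Lp ℝ 1 Q →L[ℝ] ℝ) :
    ∃ h : Ω → ℝ, Measurable h ∧ (∀ ω, |h ω| ≤ ‖φ‖) ∧
      ∀ w : Ω → ℝ, ∀ hw : MemLp w 1 Q, φ (hw.toLp w) = ∫ ω, h ω * w ω ∂Q := by
  classical
  have hι : ∀ v : Lp ℝ 2 Q, MemLp (v : Ω → ℝ) 1 Q :=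
    fun v => (Lp.memLp v).mono_exponent one_le_two
  have hnorm_le : ∀ v : Lp ℝ 2 Q, ‖(hι v).toLp (v : Ω → ℝ)‖ ≤ ‖v‖ := by
    intro v
    rw [Lp.norm_toLp, Lp.norm_def]
    exact ENNReal.toReal_mono (Lp.eLpNorm_ne_top v)
      (eLpNorm_le_eLpNorm_of_exponent_le one_le_two (Lp.aestronglyMeasurable v))
  set ψ₀ : Lp ℝ 2 Q →ₗ[ℝ] ℝ :=
    { toFun := fun v => φ ((hι v).toLp (v : Ω → ℝ))
      map_add' := by
        intro v w
        have h1 : (hι (v + w)).toLp ((v + w : Lp ℝ 2 Q) : Ω → ℝ)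
            = ((hι v).add (hι w)).toLp ((v : Ω → ℝ) + (w : Ω → ℝ)) :=
          MemLp.toLp_congr _ _ (Lp.coeFn_add v w)
        rw [h1, MemLp.toLp_add, map_add]
      map_smul' := by
        intro c v
        have h1 : (hι (c • v)).toLp ((c • v : Lp ℝ 2 Q) : Ω → ℝ)
            = ((hι v).const_smul c).toLp (c • (v : Ω → ℝ)) :=
          MemLp.toLp_congr _ _ (Lp.coeFn_smul c v)
        rw [h1, MemLp.toLp_const_smul, _root_.map_smul, RingHom.id_apply] } with hψ₀
  have hψ₀bound : ∀ v : Lp ℝ 2 Q, ‖ψ₀ v‖ ≤ ‖φ‖ * ‖v‖ := by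
    intro v
    refine le_trans (φ.le_opNorm _) ?_
    have h0 : (0:ℝ) ≤ ‖φ‖ := norm_nonneg φ
    exact mul_le_mul_of_nonneg_left (hnorm_le v) h0
  set ψ : Lp ℝ 2 Q →L[ℝ] ℝ := ψ₀.mkContinuous ‖φ‖ hψ₀bound with hψ
  set H : Lp ℝ 2 Q := (InnerProductSpace.toDual ℝ (Lp ℝ 2 Q)).symm ψ with hH
  have hrep : ∀ v : Lp ℝ 2 Q, ⟪H, v⟫ = φ ((hι v).toLp (v : Ω → ℝ)) := fun v =>
    InnerProductSpace.toDual_symm_apply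
  have hinner : ∀ v : Lp ℝ 2 Q, ⟪H, v⟫ = ∫ ω, (H : Ω → ℝ) ω * (v : Ω → ℝ) ω ∂Q := by
    intro v
    rw [L2.inner_def]
    apply integral_congr_ae
    filter_upwards with ω
    simp [RCLike.inner_apply, conj_trivial, mul_comm]
  -- identity for bounded functions
  have hbdd_id : ∀ w : Ω → ℝ, ∀ hw : MemLp w ⊤ Q,
      φ ((hw.mono_exponent le_top).toLp w)
        = ∫ ω, (H : Ω → ℝ) ω * w ω ∂Q := by
    intro w hw
    have hw2 : MemLp w 2 Q := hw.mono_exponent le_top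
    set v : Lp ℝ 2 Q := hw2.toLp w with hv
    have hvw : (v : Ω → ℝ) =ᵐ[Q] w := hw2.coeFn_toLp
    have h1 : (hι v).toLp (v : Ω → ℝ) = (hw.mono_exponent le_top).toLp w :=
      MemLp.toLp_congr _ _ hvw
    have h2 := (hrep v).symm.trans (hinner v)
    rw [h1] at h2
    rw [h2]
    apply integral_congr_ae
    filter_upwards [hvw] with ω hω
    rw [hω]
  -- norm of L¹-elements as integrals
  have key_norm : ∀ u : Ω → ℝ, ∀ hu : MemLp u 1 Q, ‖hu.toLp u‖ = ∫ ω, |u ω| ∂Q := by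
    intro u hu
    have hui : Integrable u Q := memLp_one_iff_integrable.mp hu
    rw [Lp.norm_toLp, eLpNorm_one_eq_lintegral_enorm,
      ← ofReal_integral_norm_eq_lintegral_enorm hui, ENNReal.toReal_ofReal
        (integral_nonneg (fun ω => norm_nonneg _))]
    simp [Real.norm_eq_abs]
  set M : ℝ := ‖φ‖ with hM
  have hMnn : 0 ≤ M := norm_nonneg φ
  set h₀ : Ω → ℝ := (H : Ω → ℝ) with hh₀
  have hmeas₀ : StronglyMeasurable h₀ := Lp.stronglyMeasurable H
  have hint₀ : Integrable h₀ Q := memLp_one_iff_integrable.mp (hι H)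
  -- set integrals of h₀ are bounded by M * Q s
  have hsetint : ∀ s : Set Ω, MeasurableSet s →
      |∫ ω in s, h₀ ω ∂Q| ≤ M * (Q s).toReal := by
    intro s hs
    set w : Ω → ℝ := s.indicator (fun _ => (1:ℝ)) with hw
    have hwtop : MemLp w ⊤ Q := memLp_indicator_const ⊤ hs 1 (Or.inr (measure_ne_top Q s))
    have hid := hbdd_id w hwtop
    have h2 : ∫ ω, h₀ ω * w ω ∂Q = ∫ ω in s, h₀ ω ∂Q := by
      rw [← integral_indicator hs]
      apply integral_congr_ae
      filter_upwards with ω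
      by_cases hω : ω ∈ s <;> simp [hw, Set.indicator_apply, hω]
    have hwl1 : MemLp w 1 Q := hwtop.mono_exponent le_top
    have h3 : ‖hwl1.toLp w‖ = (Q s).toReal := by
      rw [key_norm w hwl1]
      have habs : (fun ω => |w ω|) = w := by
        funext ω
        by_cases hω : ω ∈ s <;> simp [hw, Set.indicator_apply, hω]
      simp only [habs]
      rw [hw, integral_indicator_const (1:ℝ) hs, smul_eq_mul, mul_one, measureReal_def]
    calc |∫ ω in s, h₀ ω ∂Q| = |φ (hwl1.toLp w)| := by
          rw [show φ (hwl1.toLp w) = ∫ ω, h₀ ω * w ω ∂Q from hid, h2]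
      _ ≤ ‖φ‖ * ‖hwl1.toLp w‖ := φ.le_opNorm _
      _ = M * (Q s).toReal := by rw [h3]
  -- a.e. bounds
  have haebd : (∀ᵐ ω ∂Q, h₀ ω ≤ M) ∧ (∀ᵐ ω ∂Q, -M ≤ h₀ ω) := by
    constructor
    · have := ae_nonneg_of_forall_setIntegral_nonneg
        ((integrable_const M).sub hint₀) (fun s hs _ => by
          simp only [Pi.sub_apply]
          rw [integral_sub (integrable_const M).integrableOn hint₀.integrableOn,
            setIntegral_const, smul_eq_mul, measureReal_def]
          have := hsetint s hs
          have h1 := (abs_le.mp this).2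
          linarith [h1])
      filter_upwards [this] with ω hω
      simpa [Pi.sub_apply, sub_nonneg] using hω
    · have := ae_nonneg_of_forall_setIntegral_nonneg
        (hint₀.sub (integrable_const (-M))) (fun s hs _ => by
          simp only [Pi.sub_apply]
          rw [integral_sub hint₀.integrableOn (integrable_const (-M)).integrableOn,
            setIntegral_const, smul_eq_mul, measureReal_def]
          have := hsetint s hs
          have h1 := (abs_le.mp this).1
          linarith [h1])
      filter_upwards [this] with ω hω
      have h2 : (0:ℝ) ≤ h₀ ω + M := by simpa [Pi.sub_apply, sub_nonneg] using hω
      linarith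
  -- the clamped representative
  set h : Ω → ℝ := fun ω => max (-M) (min (h₀ ω) M) with hh
  have hmeas : Measurable h :=
    (measurable_const.max ((hmeas₀.measurable.min measurable_const))).comp measurable_id
  have hbound : ∀ ω, |h ω| ≤ M := by
    intro ω
    rw [abs_le]
    constructor
    · exact le_max_left _ _
    · exact max_le (by linarith) (min_le_right _ _)
  have hhae : h =ᵐ[Q] h₀ := by
    filter_upwards [haebd.1, haebd.2] with ω h1 h2
    rw [hh]
    simp only []
    rw [min_eq_left h1, max_eq_right h2]
  refine ⟨h, hmeas, hbound, ?_⟩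
  -- general identity by truncation
  intro w hw
  have hwi : Integrable w Q := memLp_one_iff_integrable.mp hw
  set wn : ℕ → Ω → ℝ := fun n ω => max (min (w ω) n) (-(n:ℝ)) with hwn
  have hwn_meas : ∀ n, AEStronglyMeasurable (wn n) Q := fun n =>
    ((hw.aestronglyMeasurable.aemeasurable.min aemeasurable_const).max
      aemeasurable_const).aestronglyMeasurable
  have hwn_bd : ∀ n, ∀ ω, |wn n ω| ≤ n := by
    intro n ω
    rw [abs_le]
    exact ⟨le_max_right _ _, max_le (min_le_right _ _) (neg_le_self (Nat.cast_nonneg n))⟩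
  have hwn_top : ∀ n, MemLp (wn n) ⊤ Q := fun n =>
    memLp_top_of_bound (hwn_meas n) n (Filter.Eventually.of_forall (fun ω => by
      simpa [Real.norm_eq_abs] using hwn_bd n ω))
  have hwn_le : ∀ n, ∀ ω, |wn n ω| ≤ |w ω| := by
    intro n ω
    have h1 : -(n:ℝ) ≤ 0 := neg_nonpos.mpr (Nat.cast_nonneg n)
    rw [abs_le]
    constructor
    · have h2 : -|w ω| ≤ min (w ω) (n:ℝ) :=
        le_min (neg_abs_le _) (le_trans (neg_nonpos.mpr (abs_nonneg _)) (Nat.cast_nonneg n))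
      exact le_trans h2 (le_max_left _ _)
    · exact max_le (le_trans (min_le_left _ _) (le_abs_self _))
        (le_trans h1 (abs_nonneg _))
  have hconv : ∀ ω, Tendsto (fun n => wn n ω) atTop (nhds (w ω)) := by
    intro ω
    apply tendsto_atTop_of_eventually_const (i₀ := ⌈|w ω|⌉₊)
    intro n hn
    have hle : |w ω| ≤ (n:ℝ) := le_trans (Nat.le_ceil _) (Nat.cast_le.mpr hn)
    have h1 : w ω ≤ (n:ℝ) := le_trans (le_abs_self _) hle
    have h2 : -(n:ℝ) ≤ w ω := by
      have := neg_abs_le (w ω); linarith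
    simp only [hwn]
    rw [min_eq_left h1, max_eq_left h2]
  have hwn1 : ∀ n, MemLp (wn n) 1 Q := fun n => (hwn_top n).mono_exponent le_top
  -- LHS convergence
  have hnorm_conv : Tendsto (fun n => ∫ ω, |w ω - wn n ω| ∂Q) atTop (nhds 0) := by
    have h0 : (0:ℝ) = ∫ (_ : Ω), (0:ℝ) ∂Q := by rw [integral_zero]
    rw [h0]
    apply tendsto_integral_of_dominated_convergence (bound := fun ω => 2 * |w ω|)
    · exact fun n => (hw.aestronglyMeasurable.sub (hwn_meas n)).norm.congr
        (Filter.Eventually.of_forall (fun ω => by simp [Real.norm_eq_abs]))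
    · exact hwi.abs.const_mul 2
    · intro n
      filter_upwards with ω
      have := hwn_le n ω
      have := abs_sub_abs_le_abs_sub (w ω) (wn n ω)
      rw [Real.norm_eq_abs, abs_abs]
      calc |w ω - wn n ω| ≤ |w ω| + |wn n ω| := abs_sub _ _
        _ ≤ 2 * |w ω| := by linarith
    · filter_upwards with ω
      have : Tendsto (fun n => w ω - wn n ω) atTop (nhds (w ω - w ω)) :=
        tendsto_const_nhds.sub (hconv ω)
      rw [sub_self] at this
      simpa [abs_zero] using this.abs
  have hLp_conv : Tendsto (fun n => φ ((hwn1 n).toLp (wn n))) atTop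
      (nhds (φ (hw.toLp w))) := by
    apply (φ.continuous.tendsto _).comp
    rw [tendsto_iff_norm_sub_tendsto_zero]
    apply hnorm_conv.congr
    intro n
    have hsub : hw.toLp w - (hwn1 n).toLp (wn n) = (hw.sub (hwn1 n)).toLp (w - wn n) :=
      (MemLp.toLp_sub hw (hwn1 n)).symm
    rw [norm_sub_rev, hsub, key_norm _ (hw.sub (hwn1 n))]
    apply integral_congr_ae
    filter_upwards with ω
    simp [Pi.sub_apply]
  -- each truncation satisfies the identity (with h in place of h₀)
  have hid_n : ∀ n, φ ((hwn1 n).toLp (wn n)) = ∫ ω, h ω * wn n ω ∂Q := by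
    intro n
    rw [show φ ((hwn1 n).toLp (wn n)) = ∫ ω, h₀ ω * wn n ω ∂Q from hbdd_id (wn n) (hwn_top n)]
    apply integral_congr_ae
    filter_upwards [hhae] with ω hω
    rw [hω]
  -- RHS convergence
  have hRHS : Tendsto (fun n => ∫ ω, h ω * wn n ω ∂Q) atTop
      (nhds (∫ ω, h ω * w ω ∂Q)) := by
    apply tendsto_integral_of_dominated_convergence (bound := fun ω => M * |w ω|)
    · exact fun n => hmeas.aestronglyMeasurable.mul (hwn_meas n)
    · exact hwi.abs.const_mul M
    · intro n
      filter_upwards with ω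
      rw [Real.norm_eq_abs, abs_mul]
      exact mul_le_mul (hbound ω) (hwn_le n ω) (abs_nonneg _) hMnn
    · filter_upwards with ω
      exact (hconv ω).const_mul (h ω)
  exact tendsto_nhds_unique (hLp_conv.congr hid_n) hRHS

end AuxLemmas

/-- The set `M₁` of separating measures for the convex cone `C ⊆ L^∞` of bounded
super-replicable claims: probability measures `Q ≪ P` with `E_Q[g] ≤ 0` for all `g ∈ C`. -/
def sepMeasures (P : Measure Ω) (C : Set (Ω → ℝ)) : Set (Measure Ω) :=
  {Q | IsProbabilityMeasure Q ∧ Q ≪ P ∧ ∀ g ∈ C, ∫ ω, g ω ∂Q ≤ 0}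

/-- The set `M_Φ` of separating measures with finite generalized entropy
`E_P[Φ(dQ/dP)] < ∞` (here `Φ(0) < +∞`, `Φ 0` being the limit of `Φ` at `0⁺`, so that
finiteness of the generalized entropy is plain integrability of `Φ(dQ/dP)`). -/
def MPhi (P : Measure Ω) (C : Set (Ω → ℝ)) (Φ : ℝ → ℝ) : Set (Measure Ω) :=
  {Q ∈ sepMeasures P C | Integrable (fun ω => Φ ((Q.rnDeriv P ω).toReal)) P}

/-- `C_Φ`: the random variables lying, for every `Q ∈ M_Φ`, in the `L¹(Q)`-norm closure
of `C`. -/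
def CPhi (P : Measure Ω) (C : Set (Ω → ℝ)) (Φ : ℝ → ℝ) : Set (Ω → ℝ) :=
  {f | ∀ Q ∈ MPhi P C Φ, Integrable f Q ∧
    ∀ ε : ℝ, 0 < ε → ∃ g ∈ C, ∫ ω, |f ω - g ω| ∂Q < ε}

section Approx

/-- Membership of bounded functions in `L^∞(Q)` for `Q ≪ P`. -/
lemma memTop_of_ac {P Q : Measure Ω} (hQP : Q ≪ P) {g : Ω → ℝ} (hg : MemLp g ⊤ P) :
    MemLp g ⊤ Q := by
  refine ⟨hg.1.mono_ac hQP, ?_⟩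
  rw [eLpNorm_exponent_top]
  have h2 := hg.2
  rw [eLpNorm_exponent_top] at h2
  exact lt_of_le_of_lt (eLpNormEssSup_mono_measure g hQP) h2

/-- The key approximation lemma: if `E_Q'[f] < x` for every `Q' ∈ M_Φ`, then `f - x` can be
approximated in `L¹(Q)` by elements of `C`, for every `Q ∈ M_Φ`. -/
lemma exists_approx (P : Measure Ω) [IsProbabilityMeasure P]
    (C : Set (Ω → ℝ))
    (hCbdd : ∀ g ∈ C, MemLp g ⊤ P)
    (hCcone : ∀ f ∈ C, ∀ g ∈ C, ∀ a b : ℝ, 0 ≤ a → 0 ≤ b →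
      (fun ω => a * f ω + b * g ω) ∈ C)
    (hCneg : ∀ f : Ω → ℝ, MemLp f ⊤ P → (∀ᵐ ω ∂P, f ω ≤ 0) → f ∈ C)
    (Φ : ℝ → ℝ)
    (hΦconv : ConvexOn ℝ (Set.Ioi 0) Φ)
    (hΦgrowth : ∀ l₀ l₁ : ℝ, 0 < l₀ → l₀ ≤ l₁ → ∃ a : ℝ, 0 < a ∧ ∃ b : ℝ, 0 < b ∧
      ∀ y : ℝ, 0 < y → ∀ l ∈ Set.Icc l₀ l₁,
        max (Φ (l * y)) 0 ≤ a * max (Φ y) 0 + b * (y + 1))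
    (hΦ0 : Tendsto Φ (nhdsWithin 0 (Set.Ioi 0)) (nhds (Φ 0)))
    (f : Ω → ℝ) (x : ℝ)
    (hfx : ∀ Q' ∈ MPhi P C Φ, Integrable f Q' ∧ ∫ ω, f ω ∂Q' < x)
    (Q : Measure Ω) (hQ : Q ∈ MPhi P C Φ) (ε : ℝ) (hε : 0 < ε) :
    ∃ g ∈ C, ∫ ω, |f ω - x - g ω| ∂Q < ε := by
  classical
  by_contra hcon
  push_neg at hcon
  obtain ⟨⟨hQprob, hQP, hQsep⟩, hQent⟩ := hQ
  haveI := hQprob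
  set F : Ω → ℝ := fun ω => f ω - x with hFdef
  have hQmem : Q ∈ MPhi P C Φ := ⟨⟨hQprob, hQP, hQsep⟩, hQent⟩
  have hFint : Integrable F Q := (hfx Q hQmem).1.sub (integrable_const x)
  have hF1 : MemLp F 1 Q := memLp_one_iff_integrable.mpr hFint
  have hgtop : ∀ g ∈ C, MemLp g ⊤ Q := fun g hg => memTop_of_ac hQP (hCbdd g hg)
  have hg1 : ∀ g ∈ C, MemLp g 1 Q := fun g hg => (hgtop g hg).mono_exponent le_top
  -- the image of `C` inside `L¹(Q)`
  set S : Set (Lp ℝ 1 Q) := {u | ∃ g, ∃ hg : g ∈ C, u = (hg1 g hg).toLp g} with hSdef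
  have hSconv : Convex ℝ S := by
    rintro u ⟨g₁, hg₁, rfl⟩ v ⟨g₂, hg₂, rfl⟩ a b ha hb hab
    refine ⟨fun ω => a * g₁ ω + b * g₂ ω, hCcone g₁ hg₁ g₂ hg₂ a b ha hb, ?_⟩
    have h₁ : MemLp (a • g₁) 1 Q := (hg1 g₁ hg₁).const_smul a
    have h₂ : MemLp (b • g₂) 1 Q := (hg1 g₂ hg₂).const_smul b
    have heq : (hg1 _ (hCcone g₁ hg₁ g₂ hg₂ a b ha hb)).toLp (fun ω => a * g₁ ω + b * g₂ ω)
        = (h₁.add h₂).toLp (a • g₁ + b • g₂) := by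
      apply MemLp.toLp_congr
      filter_upwards with ω
      simp [Pi.add_apply, Pi.smul_apply, smul_eq_mul]
    rw [heq, MemLp.toLp_add, MemLp.toLp_const_smul, MemLp.toLp_const_smul]
    exacts [h₁, h₂]
  -- `F` is at distance `≥ ε` from `S`
  have hFnot : hF1.toLp F ∉ closure S := by
    intro hmem
    rw [Metric.mem_closure_iff] at hmem
    obtain ⟨u, huS, hdist⟩ := hmem ε hε
    obtain ⟨g, hgC, rfl⟩ := huS
    have hkey : dist (hF1.toLp F) ((hg1 g hgC).toLp g) = ∫ ω, |F ω - g ω| ∂Q := by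
      rw [dist_eq_norm, ← MemLp.toLp_sub, norm_toLp_one Q _ (hF1.sub (hg1 g hgC))]
      apply integral_congr_ae
      filter_upwards with ω
      simp [Pi.sub_apply]
    rw [hkey] at hdist
    exact absurd hdist (not_lt.mpr (hcon g hgC))
  -- separation
  obtain ⟨φ, u, hu1, hu2⟩ :=
    geometric_hahn_banach_closed_point (hSconv.closure) isClosed_closure hFnot
  have h0C : (fun _ : Ω => (0:ℝ)) ∈ C :=
    hCneg _ (memLp_const 0) (Filter.Eventually.of_forall (fun ω => le_refl 0))
  have h0S : (0 : Lp ℝ 1 Q) ∈ S := by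
    refine ⟨_, h0C, ?_⟩
    have : (hg1 _ h0C).toLp (fun _ : Ω => (0:ℝ)) = 0 := by
      rw [← MemLp.toLp_zero (MemLp.zero : MemLp (0 : Ω → ℝ) 1 Q)]
      exact MemLp.toLp_congr _ _ (Filter.Eventually.of_forall (fun ω => rfl))
    rw [this]
  have hu_pos : 0 < u := by
    have := hu1 0 (subset_closure h0S)
    simpa using this
  have hφS : ∀ g : Ω → ℝ, ∀ hg : g ∈ C, φ ((hg1 g hg).toLp g) ≤ 0 := by
    intro g hg
    by_contra hpos
    push_neg at hpos
    set t : ℝ := (u + 1) / φ ((hg1 g hg).toLp g) with ht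
    have htpos : 0 < t := div_pos (by linarith) hpos
    have htg : (fun ω => t * g ω + 0 * g ω) ∈ C := hCcone g hg g hg t 0 htpos.le le_rfl
    have hmemS : t • ((hg1 g hg).toLp g) ∈ S := by
      refine ⟨_, htg, ?_⟩
      have heq : (hg1 _ htg).toLp (fun ω => t * g ω + 0 * g ω)
          = ((hg1 g hg).const_smul t).toLp (t • g) := by
        apply MemLp.toLp_congr
        filter_upwards with ω
        simp [Pi.smul_apply, smul_eq_mul]
      rw [heq, MemLp.toLp_const_smul]
    have hlt := hu1 _ (subset_closure hmemS)
    rw [ContinuousLinearMap.map_smul, smul_eq_mul, ht, div_mul_cancel₀ _ (ne_of_gt hpos)] at hlt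
    linarith
  have hφF : u < φ (hF1.toLp F) := hu2
  -- representation of φ
  obtain ⟨h, hhmeas, hhbd, hhid⟩ := rep_L1_functional Q φ
  set M : ℝ := ‖φ‖ with hM
  have hMnn : 0 ≤ M := norm_nonneg φ
  have hhint : Integrable h Q := by
    refine Integrable.mono' (integrable_const M) hhmeas.aestronglyMeasurable ?_
    filter_upwards with ω
    simpa [Real.norm_eq_abs] using hhbd ω
  -- h is a.e. nonnegative
  have hae_nonneg : ∀ᵐ ω ∂Q, 0 ≤ h ω := by
    apply ae_nonneg_of_forall_setIntegral_nonneg hhint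
    intro s hs _
    set gA : Ω → ℝ := s.indicator (fun _ => (-1:ℝ)) with hgA
    have hgAC : gA ∈ C := by
      apply hCneg
      · exact memLp_indicator_const ⊤ hs (-1) (Or.inr (measure_ne_top P s))
      · filter_upwards with ω
        by_cases hω : ω ∈ s <;> simp [hgA, Set.indicator_apply, hω]
    have hid := hhid gA (hg1 gA hgAC)
    have hneg := hφS gA hgAC
    rw [hid] at hneg
    have hcalc : ∫ ω, h ω * gA ω ∂Q = -∫ ω in s, h ω ∂Q := by
      rw [← integral_neg, ← integral_indicator hs]
      apply integral_congr_ae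
      filter_upwards with ω
      by_cases hω : ω ∈ s <;> simp [hgA, Set.indicator_apply, hω]
    rw [hcalc] at hneg
    linarith
  -- clamped nonnegative density
  set h' : Ω → ℝ := fun ω => min (max (h ω) 0) M with hh'
  have hh'meas : Measurable h' := (hhmeas.max measurable_const).min measurable_const
  have hh'nonneg : ∀ ω, 0 ≤ h' ω := fun ω => le_min (le_max_right _ _) hMnn
  have hh'le : ∀ ω, h' ω ≤ M := fun ω => min_le_right _ _
  have hh'ae : h' =ᵐ[Q] h := by
    filter_upwards [hae_nonneg] with ω hω
    have hle : h ω ≤ M := (abs_le.mp (hhbd ω)).2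
    rw [hh']
    simp only []
    rw [max_eq_left hω, min_eq_left hle]
  have hh'int : Integrable h' Q := hhint.congr hh'ae.symm
  have hid' : ∀ w : Ω → ℝ, ∀ hw : MemLp w 1 Q,
      φ (hw.toLp w) = ∫ ω, h' ω * w ω ∂Q := by
    intro w hw
    rw [hhid w hw]
    apply integral_congr_ae
    filter_upwards [hh'ae] with ω hω
    rw [hω]
  -- the new measure
  set d : Ω → ℝ≥0 := fun ω => Real.toNNReal (h' ω) with hd
  have hdmeas : Measurable d := hh'meas.real_toNNReal
  have hdcoe : ∀ ω, (d ω : ℝ) = h' ω := fun ω => Real.coe_toNNReal _ (hh'nonneg ω)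
  set Q1 : Measure Ω := Q.withDensity (fun ω => (d ω : ℝ≥0∞)) with hQ1
  set c : ℝ := ∫ ω, h' ω ∂Q with hc
  have hcnn : 0 ≤ c := integral_nonneg hh'nonneg
  have hφF' : φ (hF1.toLp F) = ∫ ω, h' ω * F ω ∂Q := hid' F hF1
  have hcpos : 0 < c := by
    rcases eq_or_lt_of_le hcnn with hc0 | hcpos
    · exfalso
      have hzero : h' =ᵐ[Q] 0 := by
        have := (integral_eq_zero_iff_of_nonneg_ae
          (Filter.Eventually.of_forall hh'nonneg) hh'int).mp hc0.symm
        exact this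
      have : ∫ ω, h' ω * F ω ∂Q = 0 := by
        rw [← integral_zero Ω ℝ (μ := Q)]
        apply integral_congr_ae
        filter_upwards [hzero] with ω hω
        simp [hω]
      rw [hφF'] at hφF
      rw [this] at hφF
      linarith
    · exact hcpos
  set cE : ℝ≥0∞ := ENNReal.ofReal c with hcE
  have hcE0 : cE ≠ 0 := by
    simp only [hcE, ne_eq, ENNReal.ofReal_eq_zero, not_le]
    exact hcpos
  have hcEtop : cE ≠ ⊤ := ENNReal.ofReal_ne_top
  set Q2 : Measure Ω := cE⁻¹ • Q1 with hQ2
  -- total mass of Q1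
  have hQ1univ : Q1 Set.univ = cE := by
    rw [hQ1, withDensity_apply _ MeasurableSet.univ, Measure.restrict_univ]
    rw [hcE, hc, ofReal_integral_eq_lintegral_ofReal hh'int
      (Filter.Eventually.of_forall hh'nonneg)]
    apply lintegral_congr
    intro ω
    rw [ENNReal.ofReal]
  haveI hQ2prob : IsProbabilityMeasure Q2 := by
    constructor
    rw [hQ2, Measure.smul_apply, hQ1univ, smul_eq_mul, ENNReal.inv_mul_cancel hcE0 hcEtop]
  have hQ2ac : Q2 ≪ P := by
    have h1 : Q1 ≪ Q := withDensity_absolutelyContinuous Q _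
    have h2 : Q2 ≪ Q1 := Measure.smul_absolutelyContinuous
    exact h2.trans (h1.trans hQP)
  -- integrals against Q2
  have hint_Q1 : ∀ w : Ω → ℝ, ∫ ω, w ω ∂Q1 = ∫ ω, h' ω * w ω ∂Q := by
    intro w
    rw [hQ1, integral_withDensity_eq_integral_smul hdmeas]
    apply integral_congr_ae
    filter_upwards with ω
    rw [NNReal.smul_def, hdcoe, smul_eq_mul]
  have hcinv_pos : (0:ℝ) < c⁻¹ := inv_pos.mpr hcpos
  have hcEinv : (cE⁻¹).toReal = c⁻¹ := by
    rw [ENNReal.toReal_inv, hcE, ENNReal.toReal_ofReal hcnn]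
  have hint_Q2 : ∀ w : Ω → ℝ, ∫ ω, w ω ∂Q2 = c⁻¹ * ∫ ω, h' ω * w ω ∂Q := by
    intro w
    rw [hQ2, integral_smul_measure, hcEinv, ← hint_Q1 w, smul_eq_mul]
  -- Q2 is separating
  have hQ2sep : ∀ g ∈ C, ∫ ω, g ω ∂Q2 ≤ 0 := by
    intro g hg
    rw [hint_Q2 g]
    have := hφS g hg
    rw [hid' g (hg1 g hg)] at this
    exact mul_nonpos_of_nonneg_of_nonpos hcinv_pos.le this
  -- the density of Q2 with respect to P
  set r : Ω → ℝ≥0∞ := Q.rnDeriv P with hr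
  have hrmeas : Measurable r := Measure.measurable_rnDeriv Q P
  set y : Ω → ℝ := fun ω => (r ω).toReal with hy
  have hymeas : Measurable y := hrmeas.ennreal_toReal
  have hynn : ∀ ω, 0 ≤ y ω := fun ω => ENNReal.toReal_nonneg
  have hyint : Integrable y P := Measure.integrable_toReal_rnDeriv
  set lam : Ω → ℝ := fun ω => c⁻¹ * h' ω with hlam
  have hQ2dens : Q2 = P.withDensity (fun ω => cE⁻¹ * (r ω * (d ω : ℝ≥0∞))) := by
    have hQd : Q = P.withDensity r := (Measure.withDensity_rnDeriv_eq Q P hQP).symm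
    have hddm : Measurable (fun ω => (d ω : ℝ≥0∞)) := hdmeas.coe_nnreal_ennreal
    rw [hQ2, hQ1]
    nth_rewrite 1 [hQd]
    rw [← withDensity_mul P hrmeas hddm]
    have hpe : (r * fun ω => (d ω : ℝ≥0∞)) = (fun ω => r ω * (d ω : ℝ≥0∞)) := rfl
    rw [hpe, ← withDensity_smul cE⁻¹ (f := fun ω => r ω * (d ω : ℝ≥0∞)) (hrmeas.mul hddm)]
    congr 1
  have hQ2rn : (fun ω => (Q2.rnDeriv P ω).toReal) =ᵐ[P] (fun ω => lam ω * y ω) := by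
    have h1 : Q2.rnDeriv P =ᵐ[P] (fun ω => cE⁻¹ * (r ω * (d ω : ℝ≥0∞))) := by
      rw [hQ2dens]
      exact Measure.rnDeriv_withDensity P
        ((hrmeas.mul (hdmeas.coe_nnreal_ennreal)).const_mul _)
    filter_upwards [h1] with ω hω
    rw [hω, ENNReal.toReal_mul, ENNReal.toReal_mul, hcEinv]
    simp only [hlam, hy]
    rw [ENNReal.coe_toReal, hdcoe]
    ring
  -- entropy bound
  have hlam_nonneg : ∀ ω, 0 ≤ lam ω := fun ω => mul_nonneg hcinv_pos.le (hh'nonneg ω)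
  set M' : ℝ := max 1 (c⁻¹ * M) with hM'
  have hM'1 : (1:ℝ) ≤ M' := le_max_left _ _
  have hlam_le : ∀ ω, lam ω ≤ M' := by
    intro ω
    refine le_trans ?_ (le_max_right _ _)
    exact mul_le_mul_of_nonneg_left (hh'le ω) hcinv_pos.le
  obtain ⟨a, hapos, b, hbpos, hG⟩ := hΦgrowth 1 M' one_pos hM'1
  obtain ⟨K, hKnn, hKbd⟩ := convex_lower_bound hΦconv
  set a' : ℝ := max a 1 with ha'
  have ha'1 : (1:ℝ) ≤ a' := le_max_right _ _
  have haa' : a ≤ a' := le_max_left _ _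
  set G : Ω → ℝ := fun ω =>
    a' * |Φ (y ω)| + b * (y ω + 1) + |Φ 0| + K * (1 + M' * y ω) with hGdef
  have hGint : Integrable G P := by
    have h1 : Integrable (fun ω => Φ (y ω)) P := hQent
    have h2 : Integrable (fun ω => |Φ (y ω)|) P := h1.abs
    exact (((h2.const_mul a').add ((hyint.add (integrable_const 1)).const_mul b)).add
      (integrable_const |Φ 0|)).add
      (((hyint.const_mul M').add (integrable_const 1)).const_mul K |>.congr
        (by filter_upwards with ω; simp only [Pi.add_apply]; ring))
  set Ψ : ℝ → ℝ := fun t => if t ≤ 0 then Φ 0 else Φ t with hΨdef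
  have hΨcont : Continuous Ψ := convex_ext_continuous hΦconv hΦ0
  have hmeasΦ : AEStronglyMeasurable (fun ω => Φ (lam ω * y ω)) P := by
    have hfun : (fun ω => Φ (lam ω * y ω)) = fun ω => Ψ (lam ω * y ω) := by
      funext ω
      rcases eq_or_lt_of_le (mul_nonneg (hlam_nonneg ω) (hynn ω)) with h0 | h0
      · rw [hΨdef]; simp only []
        rw [if_pos (le_of_eq h0.symm), ← h0]
      · rw [hΨdef]; simp only []
        rw [if_neg (not_le.mpr h0)]
    rw [hfun]
    exact (hΨcont.measurable.comp
      (((hh'meas.const_mul c⁻¹).mul hymeas))).aestronglyMeasurable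
  have hbd_ae : ∀ ω, |Φ (lam ω * y ω)| ≤ G ω := by
    intro ω
    set z : ℝ := lam ω * y ω with hz
    have hznn : 0 ≤ z := mul_nonneg (hlam_nonneg ω) (hynn ω)
    have hzM'y : z ≤ M' * y ω := mul_le_mul_of_nonneg_right (hlam_le ω) (hynn ω)
    have hlow : -(K * (1 + M' * y ω)) ≤ Φ z := by
      refine le_trans ?_ (hKbd z hznn)
      have : K * (1 + z) ≤ K * (1 + M' * y ω) :=
        mul_le_mul_of_nonneg_left (by linarith) hKnn
      linarith
    have hGterms : 0 ≤ a' * |Φ (y ω)| ∧ 0 ≤ b * (y ω + 1) ∧ 0 ≤ K * (1 + M' * y ω) := by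
      refine ⟨mul_nonneg (by linarith) (abs_nonneg _),
        mul_nonneg hbpos.le (by linarith [hynn ω]), ?_⟩
      have h1 : 0 ≤ M' * y ω := mul_nonneg (by linarith) (hynn ω)
      exact mul_nonneg hKnn (by linarith)
    have hup : Φ z ≤ a' * |Φ (y ω)| + b * (y ω + 1) + |Φ 0| := by
      rcases eq_or_lt_of_le hznn with h0 | hzpos
      · rw [← h0]
        have := le_abs_self (Φ 0)
        linarith [hGterms.1, hGterms.2.1]
      · have hypos : 0 < y ω := by
          rcases eq_or_lt_of_le (hynn ω) with h0' | h0'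
          · exfalso; rw [hz, ← h0', mul_zero] at hzpos; exact lt_irrefl 0 hzpos
          · exact h0'
        rcases le_or_gt (lam ω) 1 with hl1 | hl1
        · have hzy : z ≤ y ω := by
            calc z = lam ω * y ω := hz
              _ ≤ 1 * y ω := mul_le_mul_of_nonneg_right hl1 (hynn ω)
              _ = y ω := one_mul _
          have := convex_small_bound hΦconv hΦ0 (y ω) z hzpos hzy
          have h1 : max (Φ 0) (Φ (y ω)) ≤ |Φ 0| + |Φ (y ω)| := by
            apply max_le
            · linarith [le_abs_self (Φ 0), abs_nonneg (Φ (y ω))]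
            · linarith [le_abs_self (Φ (y ω)), abs_nonneg (Φ 0)]
          have h2 : |Φ (y ω)| ≤ a' * |Φ (y ω)| :=
            le_mul_of_one_le_left (abs_nonneg _) ha'1
          linarith [hGterms.2.1]
        · have hgrow := hG (y ω) hypos (lam ω) ⟨hl1.le, hlam_le ω⟩
          have h1 : Φ z ≤ max (Φ z) 0 := le_max_left _ _
          have h2 : max (Φ (y ω)) 0 ≤ |Φ (y ω)| := max_le (le_abs_self _) (abs_nonneg _)
          have h3 : a * max (Φ (y ω)) 0 ≤ a' * |Φ (y ω)| := by
            calc a * max (Φ (y ω)) 0 ≤ a * |Φ (y ω)| :=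
                  mul_le_mul_of_nonneg_left h2 hapos.le
              _ ≤ a' * |Φ (y ω)| := mul_le_mul_of_nonneg_right haa' (abs_nonneg _)
          have h4 : Φ (lam ω * y ω) = Φ z := by rw [hz]
          calc Φ z ≤ max (Φ z) 0 := h1
            _ = max (Φ (lam ω * y ω)) 0 := by rw [hz]
            _ ≤ a * max (Φ (y ω)) 0 + b * (y ω + 1) := hgrow
            _ ≤ a' * |Φ (y ω)| + b * (y ω + 1) := by linarith
            _ ≤ a' * |Φ (y ω)| + b * (y ω + 1) + |Φ 0| := by
                linarith [abs_nonneg (Φ 0)]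
    rw [abs_le]
    constructor
    · rw [hGdef]; simp only []
      linarith [hGterms.1, hGterms.2.1, le_abs_self (Φ 0), abs_nonneg (Φ 0)]
    · rw [hGdef]; simp only []
      linarith [hGterms.2.2]
  have hQ2ent : Integrable (fun ω => Φ ((Q2.rnDeriv P ω).toReal)) P := by
    have h1 : Integrable (fun ω => Φ (lam ω * y ω)) P := by
      refine Integrable.mono' hGint hmeasΦ ?_
      filter_upwards with ω
      rw [Real.norm_eq_abs]
      exact hbd_ae ω
    exact h1.congr (by filter_upwards [hQ2rn] with ω hω; rw [hω])
  -- Q2 belongs to M_Φ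
  have hQ2mem : Q2 ∈ MPhi P C Φ := ⟨⟨hQ2prob, hQ2ac, hQ2sep⟩, hQ2ent⟩
  -- the contradiction
  obtain ⟨hfQ2, hfQ2lt⟩ := hfx Q2 hQ2mem
  have hFQ2 : ∫ ω, F ω ∂Q2 = ∫ ω, f ω ∂Q2 - x := by
    rw [hFdef]
    rw [integral_sub hfQ2 (integrable_const x), integral_const]
    simp
  have hFQ2pos : 0 < ∫ ω, F ω ∂Q2 := by
    rw [hint_Q2 F, ← hφF']
    exact mul_pos hcinv_pos (lt_trans hu_pos hφF)
  rw [hFQ2] at hFQ2pos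
  linarith

end Approx

/-- Theorem 5 of Biagini–Frittelli (weak super replication duality): if `Φ(0) < +∞`,
`M_Φ` contains a measure equivalent to `P`, and `f ∈ L¹(Q)` for all `Q ∈ M_Φ`, then the
weak super replication price satisfies
`inf {x ∈ ℝ : f - x ∈ C_Φ} = sup {E_Q[f] : Q ∈ M_Φ}` in `ℝ ∪ {+∞}`. -/
theorem weak_superreplication_duality
    (P : Measure Ω) [IsProbabilityMeasure P]
    (C : Set (Ω → ℝ))
    (hCbdd : ∀ g ∈ C, MemLp g ⊤ P)
    (hCcone : ∀ f ∈ C, ∀ g ∈ C, ∀ a b : ℝ, 0 ≤ a → 0 ≤ b →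
      (fun ω => a * f ω + b * g ω) ∈ C)
    (hCneg : ∀ f : Ω → ℝ, MemLp f ⊤ P → (∀ᵐ ω ∂P, f ω ≤ 0) → f ∈ C)
    (Φ : ℝ → ℝ)
    (hΦconv : ConvexOn ℝ (Set.Ioi 0) Φ)
    (hΦgrowth : ∀ l₀ l₁ : ℝ, 0 < l₀ → l₀ ≤ l₁ → ∃ a : ℝ, 0 < a ∧ ∃ b : ℝ, 0 < b ∧
      ∀ y : ℝ, 0 < y → ∀ l ∈ Set.Icc l₀ l₁,
        max (Φ (l * y)) 0 ≤ a * max (Φ y) 0 + b * (y + 1))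
    (hΦ0 : Tendsto Φ (nhdsWithin 0 (Set.Ioi 0)) (nhds (Φ 0)))
    (hMPhiP : ∃ Q ∈ MPhi P C Φ, P ≪ Q)
    (f : Ω → ℝ) (hf : ∀ Q ∈ MPhi P C Φ, Integrable f Q) :
    sInf ((fun x : ℝ => (x : EReal)) '' {x : ℝ | (fun ω => f ω - x) ∈ CPhi P C Φ}) =
      sSup ((fun Q : Measure Ω => ((∫ ω, f ω ∂Q : ℝ) : EReal)) '' MPhi P C Φ) := by
  obtain ⟨Q₀, hQ₀, _⟩ := hMPhiP
  set A : Set EReal := (fun x : ℝ => (x : EReal)) '' {x : ℝ | (fun ω => f ω - x) ∈ CPhi P C Φ}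
    with hA
  set B : Set EReal := (fun Q : Measure Ω => ((∫ ω, f ω ∂Q : ℝ) : EReal)) '' MPhi P C Φ with hB
  -- the easy inequality : sSup B ≤ sInf A
  have heasy : sSup B ≤ sInf A := by
    apply le_sInf
    rintro e ⟨x, hx, rfl⟩
    apply sSup_le
    rintro e' ⟨Q, hQm, rfl⟩
    rw [EReal.coe_le_coe_iff]
    haveI := hQm.1.1
    have hQP : Q ≪ P := hQm.1.2.1
    obtain ⟨hint, happrox⟩ := hx Q hQm
    by_contra hgt
    push_neg at hgt
    set δ : ℝ := ∫ ω, f ω ∂Q - x with hδ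
    have hδpos : 0 < δ := by rw [hδ]; linarith
    obtain ⟨g, hgC, hlt⟩ := happrox δ hδpos
    have hgint : Integrable g Q := by
      have := memTop_of_ac hQP (hCbdd g hgC)
      exact memLp_one_iff_integrable.mp (this.mono_exponent le_top)
    have hgle : ∫ ω, g ω ∂Q ≤ 0 := hQm.1.2.2 g hgC
    have hsub : Integrable (fun ω => f ω - x - g ω) Q := (hint.sub hgint)
    have h1 : ∫ ω, (f ω - x - g ω) ∂Q ≤ ∫ ω, |f ω - x - g ω| ∂Q := by
      apply integral_mono hsub hsub.abs
      intro ω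
      exact le_abs_self _
    have h2 : ∫ ω, (f ω - x - g ω) ∂Q = ∫ ω, (f ω - x) ∂Q - ∫ ω, g ω ∂Q :=
      integral_sub hint hgint
    have h3 : ∫ ω, (f ω - x) ∂Q = ∫ ω, f ω ∂Q - x := by
      rw [integral_sub (hf Q hQm) (integrable_const x), integral_const]
      simp
    rw [h2, h3] at h1
    rw [hδ] at hlt
    linarith
  -- the hard inequality : sInf A ≤ sSup B
  have hBne : ((∫ ω, f ω ∂Q₀ : ℝ) : EReal) ∈ B := ⟨Q₀, hQ₀, rfl⟩
  have hhard : sInf A ≤ sSup B := by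
    apply le_of_forall_gt_imp_ge_of_dense
    intro e hBe
    have hnbot : ((∫ ω, f ω ∂Q₀ : ℝ) : EReal) ≤ sSup B := le_sSup hBne
    obtain ⟨x, hx1, hx2⟩ := EReal.exists_between_coe_real hBe
    have hmem : (fun ω => f ω - x) ∈ CPhi P C Φ := by
      intro Q hQm
      haveI := hQm.1.1
      refine ⟨(hf Q hQm).sub (integrable_const x), ?_⟩
      intro ε hε
      have hfx : ∀ Q' ∈ MPhi P C Φ, Integrable f Q' ∧ ∫ ω, f ω ∂Q' < x := by
        intro Q' hQ'
        refine ⟨hf Q' hQ', ?_⟩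
        have hle : ((∫ ω, f ω ∂Q' : ℝ) : EReal) ≤ sSup B := le_sSup ⟨Q', hQ', rfl⟩
        have hlt := lt_of_le_of_lt hle hx1
        exact_mod_cast hlt
      obtain ⟨g, hgC, hlt⟩ := exists_approx P C hCbdd hCcone hCneg Φ hΦconv hΦgrowth hΦ0
        f x hfx Q hQm ε hε
      exact ⟨g, hgC, hlt⟩
    exact le_trans (sInf_le ⟨x, hmem, rfl⟩) hx2.le
  exact le_antisymm hhard heasy
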